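/- arXiv:1201.6012 — 2 statements merged into one kernel-verified Lean document; each statement's English description precedes it below -/
import Mathlib

section
/- Let q be a prime power such that either F_q has characteristic 2 or q ≡ 1 (mod 4), let m be a positive integer coprime to q, and let R = F_q[Y]/(Y^m − 1). Then there exists a Hermitian self-dual linear code over R of length ℓ if and only if ℓ is even. -/
open Polynomial

noncomputable section

/-- The ring `R = F_q[Y]/(Y^m − 1)`. -/
abbrev Rq (F : Type) [Field F] (m : ℕ) := AdjoinRoot ((X : F[X]) ^ m - 1)

lemma root_pow_eq_one (F : Type) [Field F] (m : ℕ) :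
    (AdjoinRoot.root ((X : F[X]) ^ m - 1)) ^ m = 1 := by
  have h : (aeval (AdjoinRoot.root ((X : F[X]) ^ m - 1)) ((X : F[X]) ^ m - 1)) = 0 := by
    rw [AdjoinRoot.aeval_eq, AdjoinRoot.mk_self]
  simp only [map_sub, map_pow, aeval_X, map_one, sub_eq_zero] at h
  exact h

/-- Conjugation on `R`: the `F`-algebra map determined by `Y ↦ Y^{m−1} (= Y⁻¹)`. -/
noncomputable def conjR (F : Type) [Field F] (m : ℕ) : Rq F m →ₐ[F] Rq F m :=
  AdjoinRoot.liftAlgHom _ (Algebra.ofId F _) ((AdjoinRoot.root ((X : F[X]) ^ m - 1)) ^ (m - 1)) (by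
    change aeval _ ((X : F[X]) ^ m - 1) = 0
    simp only [map_sub, map_pow, aeval_X, map_one, sub_eq_zero, ← pow_mul]
    rw [mul_comm, pow_mul, root_pow_eq_one, one_pow])

/-- The Hermitian inner product `⟨x,y⟩ = Σ_j x_j ⬝ conj(y_j)` on `R^n`. -/
def herm (F : Type) [Field F] (m : ℕ) {n : ℕ} (x y : Fin n → Rq F m) : Rq F m :=
  ∑ j, x j * conjR F m (y j)

/-- A linear code `C ⊆ R^n` is Hermitian self-dual if `C = C^⊥`, i.e. membership in `C`
coincides with orthogonality to all of `C`. -/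
def IsHermSelfDual (F : Type) [Field F] (m : ℕ) {n : ℕ}
    (C : Submodule (Rq F m) (Fin n → Rq F m)) : Prop :=
  ∀ y, y ∈ C ↔ ∀ x ∈ C, herm F m x y = 0

/- ---------------- Auxiliary material ---------------- -/

section Aux

variable (F : Type) [Field F] (m : ℕ)

lemma aux_pow_eq_pow_of_mod {M : Type*} [Monoid M] {z : M} {n : ℕ} (hz : z ^ n = 1) {a b : ℕ}
    (h : a % n = b % n) : z ^ a = z ^ b := by
  have key : ∀ t : ℕ, z ^ t = z ^ (t % n) := by
    intro t
    conv_lhs => rw [← Nat.div_add_mod t n]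
    rw [pow_add, pow_mul, hz, one_pow, one_mul]
  rw [key a, key b, h]

lemma conjR_root : conjR F m (AdjoinRoot.root ((X : F[X]) ^ m - 1)) =
    (AdjoinRoot.root ((X : F[X]) ^ m - 1)) ^ (m - 1) := by
  unfold conjR; apply AdjoinRoot.liftAlgHom_root

lemma root_pow_sq (hm : 0 < m) :
    (AdjoinRoot.root ((X : F[X]) ^ m - 1)) ^ ((m - 1) * (m - 1)) =
      AdjoinRoot.root ((X : F[X]) ^ m - 1) := by
  have h : (m - 1) * (m - 1) % m = 1 % m := by
    obtain ⟨t, rfl⟩ : ∃ t, m = t + 1 := ⟨m - 1, by omega⟩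
    simp only [Nat.add_sub_cancel]
    rcases t with _ | s
    · simp
    · rw [show (s + 1) * (s + 1) = 1 + (s + 1 + 1) * s by ring, Nat.add_mul_mod_self_left]
  have h2 := aux_pow_eq_pow_of_mod (root_pow_eq_one F m) h
  rwa [pow_one] at h2

lemma conjR_comp (hm : 0 < m) : (conjR F m).comp (conjR F m) = AlgHom.id F (Rq F m) := by
  apply AdjoinRoot.algHom_ext
  rw [AlgHom.comp_apply, conjR_root, map_pow, conjR_root, ← pow_mul, AlgHom.id_apply]
  exact root_pow_sq F m hm

lemma conjR_conjR (hm : 0 < m) (z : Rq F m) : conjR F m (conjR F m z) = z := by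
  have h := DFunLike.congr_fun (conjR_comp F m hm) z
  simpa using h

/-- Evaluation at `Y = 1`. -/
def evalOne : Rq F m →ₐ[F] F :=
  AdjoinRoot.liftAlgHom _ (Algebra.ofId F _) 1 (by simp)

lemma evalOne_root : evalOne F m (AdjoinRoot.root ((X : F[X]) ^ m - 1)) = 1 := by
  unfold evalOne; apply AdjoinRoot.liftAlgHom_root

lemma evalOne_conjR (z : Rq F m) : evalOne F m (conjR F m z) = evalOne F m z := by
  have h : (evalOne F m).comp (conjR F m) = evalOne F m := by
    apply AdjoinRoot.algHom_ext
    rw [AlgHom.comp_apply, conjR_root, map_pow, evalOne_root, one_pow]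
  have h2 := DFunLike.congr_fun h z
  simpa using h2

lemma root_pow_mul {t : Rq F m} (ht : AdjoinRoot.root ((X : F[X]) ^ m - 1) * t = t) (k : ℕ) :
    (AdjoinRoot.root ((X : F[X]) ^ m - 1)) ^ k * t = t := by
  induction k with
  | zero => simp
  | succ k ih => rw [pow_succ, mul_assoc, ht, ih]

lemma mul_special {t : Rq F m} (ht : AdjoinRoot.root ((X : F[X]) ^ m - 1) * t = t)
    (z : Rq F m) : z * t = algebraMap F (Rq F m) (evalOne F m z) * t := by
  obtain ⟨p, rfl⟩ := AdjoinRoot.mk_surjective z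
  induction p using Polynomial.induction_on' with
  | add p q hp hq => rw [map_add, add_mul, hp, hq, map_add, map_add, add_mul]
  | monomial n a =>
    have h1 : (AdjoinRoot.mk ((X : F[X]) ^ m - 1) (Polynomial.monomial n a) : Rq F m)
        = algebraMap F (Rq F m) a * (AdjoinRoot.root ((X : F[X]) ^ m - 1)) ^ n := by
      rw [← Polynomial.C_mul_X_pow_eq_monomial, map_mul, map_pow, AdjoinRoot.mk_X,
        AdjoinRoot.mk_C]
      rfl
    rw [h1, mul_assoc, root_pow_mul F m ht, map_mul, map_pow, evalOne_root, one_pow, mul_one,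
      AlgHom.commutes]
    simp

/-- The sum of all powers of the root. -/
def sElt : Rq F m := ∑ i ∈ Finset.range m, (AdjoinRoot.root ((X : F[X]) ^ m - 1)) ^ i

lemma root_mul_sElt (hm : 0 < m) :
    AdjoinRoot.root ((X : F[X]) ^ m - 1) * sElt F m = sElt F m := by
  obtain ⟨n, rfl⟩ : ∃ n, m = n + 1 := ⟨m - 1, by omega⟩
  unfold sElt
  rw [Finset.mul_sum]
  simp_rw [← pow_succ']
  rw [Finset.sum_range_succ, root_pow_eq_one F (n + 1)]
  conv_rhs => rw [Finset.sum_range_succ']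
  rw [pow_zero]

lemma evalOne_sElt : evalOne F m (sElt F m) = (m : F) := by
  unfold sElt
  rw [map_sum]
  simp [evalOne_root]

end Aux

/-- There exists a Hermitian self-dual linear code over `R = F_q[Y]/(Y^m − 1)` of
length `ℓ` iff `ℓ` is even (char 2 or `q ≡ 1 (mod 4)` case). -/
theorem statement0 (F : Type) [Field F] [Fintype F]
    (hq : ringChar F = 2 ∨ Fintype.card F % 4 = 1)
    (m : ℕ) (hm : 0 < m) (hcop : Nat.Coprime m (Fintype.card F)) (ℓ : ℕ) :
    (∃ C : Submodule (Rq F m) (Fin ℓ → Rq F m), IsHermSelfDual F m C) ↔ Even ℓ := by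
  classical
  constructor
  · rintro ⟨C, hC⟩
    haveI : CharP F (ringChar F) := ringChar.charP F
    have hm0 : (m : F) ≠ 0 := by
      intro h0
      have hdvd : ringChar F ∣ m := (CharP.cast_eq_zero_iff F (ringChar F) m).mp h0
      obtain ⟨n, hp, hcard⟩ := FiniteField.card F (ringChar F)
      have hdvd2 : ringChar F ∣ Fintype.card F := by
        rw [hcard]; exact dvd_pow_self _ n.2.ne'
      have h1 : ringChar F ∣ 1 := hcop ▸ Nat.dvd_gcd hdvd hdvd2
      exact hp.one_lt.ne' (Nat.dvd_one.mp h1)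
    let Φ : (Fin ℓ → Rq F m) →ₗ[F] (Fin ℓ → F) :=
      { toFun := fun x j => evalOne F m (x j)
        map_add' := by intro x y; funext j; simp
        map_smul' := by intro a x; funext j; simp }
    let W : Submodule F (Fin ℓ → F) := Submodule.map Φ (C.restrictScalars F)
    let B : LinearMap.BilinForm F (Fin ℓ → F) :=
      LinearMap.mk₂ F (fun v w => ∑ j, v j * w j)
        (fun v v' w => by simp [add_mul, Finset.sum_add_distrib])
        (fun a v w => by
          simp only [Pi.smul_apply, smul_eq_mul, Finset.mul_sum]
          exact Finset.sum_congr rfl fun j _ => by ring)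
        (fun v w w' => by simp [mul_add, Finset.sum_add_distrib])
        (fun a v w => by
          simp only [Pi.smul_apply, smul_eq_mul, Finset.mul_sum]
          exact Finset.sum_congr rfl fun j _ => by ring)
    have hB : ∀ v w, B v w = ∑ j, v j * w j := fun _ _ => rfl
    have hsymm : ∀ v w, B v w = B w v := by
      intro v w; rw [hB, hB]; exact Finset.sum_congr rfl fun j _ => mul_comm _ _
    have hrefl : B.IsRefl := fun v w h => (hsymm w v).trans h
    have hnd : B.Nondegenerate := by
      refine (LinearMap.IsRefl.nondegenerate_iff_separatingLeft hrefl).mpr ?_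
      intro v hv
      funext j
      have h1 := hv (Pi.single j 1)
      rw [hB] at h1
      rw [Finset.sum_eq_single j] at h1
      · simpa using h1
      · intro i _ hij; rw [Pi.single_eq_of_ne hij, mul_zero]
      · intro habs; exact absurd (Finset.mem_univ j) habs
    have hWle : ∀ v ∈ W, ∀ w ∈ W, B v w = 0 := by
      intro v hv w hw
      rw [Submodule.mem_map] at hv hw
      obtain ⟨x, hx, rfl⟩ := hv
      obtain ⟨y, hy, rfl⟩ := hw
      have hx' : x ∈ C := hx
      have hy' : y ∈ C := hy
      have h0 : herm F m x y = 0 := (hC y).mp hy' x hx'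
      have h2 := congrArg (evalOne F m) h0
      rw [herm, map_sum, map_zero] at h2
      rw [hB]
      calc (∑ j, Φ x j * Φ y j)
          = ∑ j, evalOne F m (x j * conjR F m (y j)) := by
            exact Finset.sum_congr rfl fun j _ => by
              simp only [Φ, LinearMap.coe_mk, AddHom.coe_mk, map_mul, evalOne_conjR]
        _ = 0 := h2
    have hWge : ∀ v, (∀ w ∈ W, B w v = 0) → v ∈ W := by
      intro v hv
      have hroots : AdjoinRoot.root ((X : F[X]) ^ m - 1) * sElt F m = sElt F m :=
        root_mul_sElt F m hm
      set s' := conjR F m (sElt F m) with hs'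
      have hconjs' : conjR F m s' = sElt F m := conjR_conjR F m hm _
      have hroots' : AdjoinRoot.root ((X : F[X]) ^ m - 1) * s' = s' := by
        have h1 : (AdjoinRoot.root ((X : F[X]) ^ m - 1)) ^ (m - 1) * sElt F m = sElt F m :=
          root_pow_mul F m hroots (m - 1)
        have h2 := congrArg (conjR F m) h1
        rw [map_mul, map_pow, conjR_root, ← pow_mul, root_pow_sq F m hm] at h2
        rw [hs']
        exact h2
      set w' : Fin ℓ → Rq F m := fun j => algebraMap F (Rq F m) (v j) * s' with hw'
      have hw'C : w' ∈ C := by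
        rw [hC]
        intro x hx
        rw [herm]
        have hterm : ∀ j, x j * conjR F m (w' j)
            = algebraMap F (Rq F m) (evalOne F m (x j) * v j) * sElt F m := by
          intro j
          have h2 : conjR F m (w' j) = algebraMap F (Rq F m) (v j) * sElt F m := by
            rw [hw']
            simp only []
            rw [map_mul, AlgHom.commutes, hconjs']
          calc x j * conjR F m (w' j)
              = algebraMap F (Rq F m) (v j) * (x j * sElt F m) := by rw [h2]; ring
            _ = algebraMap F (Rq F m) (v j)
                * (algebraMap F (Rq F m) (evalOne F m (x j)) * sElt F m) := by
                rw [mul_special F m hroots]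
            _ = algebraMap F (Rq F m) (evalOne F m (x j) * v j) * sElt F m := by
                rw [map_mul]; ring
        have hx2 : Φ x ∈ W := Submodule.mem_map.mpr ⟨x, hx, rfl⟩
        have h3 := hv (Φ x) hx2
        rw [hB] at h3
        calc (∑ j, x j * conjR F m (w' j))
            = ∑ j, algebraMap F (Rq F m) (evalOne F m (x j) * v j) * sElt F m :=
              Finset.sum_congr rfl fun j _ => hterm j
          _ = algebraMap F (Rq F m) (∑ j, evalOne F m (x j) * v j) * sElt F m := by
              rw [map_sum, Finset.sum_mul]
          _ = 0 := by
              rw [show (∑ j, evalOne F m (x j) * v j) = 0 from h3, map_zero, zero_mul]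
      have hΦw' : Φ w' = (m : F) • v := by
        funext j
        show evalOne F m (w' j) = ((m : F) • v) j
        rw [hw']
        simp only [Pi.smul_apply, smul_eq_mul]
        rw [map_mul, AlgHom.commutes, hs', evalOne_conjR, evalOne_sElt]
        simp [mul_comm]
      have h4 : (m : F) • v ∈ W := hΦw' ▸ Submodule.mem_map.mpr ⟨w', hw'C, rfl⟩
      have h5 := W.smul_mem ((m : F)⁻¹) h4
      rwa [smul_smul, inv_mul_cancel₀ hm0, one_smul] at h5
    have hWeq : B.orthogonal W = W := by
      ext v
      rw [LinearMap.BilinForm.mem_orthogonal_iff]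
      constructor
      · intro h; exact hWge v h
      · intro hvW w hw; exact hWle w hw v hvW
    have hfin := LinearMap.BilinForm.finrank_add_finrank_orthogonal hrefl (B := B) W
    rw [LinearMap.BilinForm.orthogonal_top_eq_bot hnd, inf_bot_eq, finrank_bot, add_zero,
      hWeq, Module.finrank_fin_fun] at hfin
    exact ⟨Module.finrank F W, by omega⟩
  · intro hl
    obtain ⟨c, hc⟩ : ∃ c : F, c * c = -1 := by
      rcases hq with h2 | h4
      · refine ⟨1, ?_⟩
        haveI : CharP F 2 := ringChar.of_eq h2
        rw [one_mul]
        exact (CharTwo.neg_eq 1).symm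
      · obtain ⟨r, hr⟩ := (FiniteField.isSquare_neg_one_iff (F := F)).mpr (by omega)
        exact ⟨r, hr.symm⟩
    obtain ⟨k, rfl⟩ := hl
    set c' : Rq F m := algebraMap F (Rq F m) c with hc'
    have hc'2 : c' * c' = -1 := by rw [hc', ← map_mul, hc, map_neg, map_one]
    have hconjc' : conjR F m c' = c' := by rw [hc']; exact AlgHom.commutes _ c
    let C : Submodule (Rq F m) (Fin (k + k) → Rq F m) :=
      { carrier := {y | ∀ i : Fin k, y (Fin.natAdd k i) = c' * y (Fin.castAdd k i)}
        add_mem' := by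
          intro a b ha hb i
          simp only [Set.mem_setOf_eq] at ha hb
          simp only [Pi.add_apply, ha i, hb i]
          ring
        zero_mem' := by intro i; simp
        smul_mem' := by
          intro r y hy i
          simp only [Set.mem_setOf_eq] at hy
          simp only [Pi.smul_apply, smul_eq_mul, hy i]
          ring }
    refine ⟨C, ?_⟩
    have hmemC : ∀ y : Fin (k + k) → Rq F m,
        y ∈ C ↔ ∀ i : Fin k, y (Fin.natAdd k i) = c' * y (Fin.castAdd k i) :=
      fun y => Iff.rfl
    have hne : ∀ i i' : Fin k, (Fin.castAdd k i : Fin (k + k)) ≠ Fin.natAdd k i' := by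
      intro i i' h
      have h2 := congrArg Fin.val h
      simp only [Fin.coe_castAdd, Fin.coe_natAdd] at h2
      omega
    have hval : ∀ u w : Fin k, Fin.natAdd k u = Fin.natAdd k w → u = w := by
      intro u w h
      have h2 := congrArg Fin.val h
      simp only [Fin.coe_natAdd] at h2
      exact Fin.ext (by omega)
    have hval2 : ∀ u w : Fin k, Fin.castAdd k u = Fin.castAdd k w → u = w := by
      intro u w h
      have h2 := congrArg Fin.val h
      simp only [Fin.coe_castAdd] at h2
      exact Fin.ext (by omega)
    have hsum : ∀ x y : Fin (k + k) → Rq F m, herm F m x y =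
        ∑ i : Fin k, (x (Fin.castAdd k i) * conjR F m (y (Fin.castAdd k i))
          + x (Fin.natAdd k i) * conjR F m (y (Fin.natAdd k i))) := by
      intro x y
      rw [herm, Finset.sum_add_distrib,
        ← Equiv.sum_comp finSumFinEquiv (fun j => x j * conjR F m (y j)),
        Fintype.sum_sum_type]
      simp [finSumFinEquiv_apply_left, finSumFinEquiv_apply_right]
    show IsHermSelfDual F m C
    intro y
    constructor
    · intro hy x hx
      rw [hsum]
      apply Finset.sum_eq_zero
      intro i _
      have hxi := (hmemC x).mp hx i
      have hyi := (hmemC y).mp hy i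
      rw [hxi, hyi, map_mul, hconjc']
      linear_combination (x (Fin.castAdd k i) * conjR F m (y (Fin.castAdd k i))) * hc'2
    · intro h
      rw [hmemC]
      intro i
      set a : Fin (k + k) := Fin.castAdd k i with ha
      set b : Fin (k + k) := Fin.natAdd k i with hb
      set x : Fin (k + k) → Rq F m := Pi.single a 1 + Pi.single b c' with hxdef
      have hxa : x a = 1 := by
        rw [hxdef]
        simp only [Pi.add_apply]
        rw [Pi.single_eq_same, Pi.single_eq_of_ne (hne i i), add_zero]
      have hxb : x b = c' := by
        rw [hxdef]
        simp only [Pi.add_apply]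
        rw [Pi.single_eq_same, Pi.single_eq_of_ne (Ne.symm (hne i i)), zero_add]
      have hx0 : ∀ i' : Fin k, i' ≠ i →
          x (Fin.castAdd k i') = 0 ∧ x (Fin.natAdd k i') = 0 := by
        intro i' hii
        constructor
        · rw [hxdef]
          simp only [Pi.add_apply]
          rw [Pi.single_eq_of_ne, Pi.single_eq_of_ne, add_zero]
          · exact hne i' i
          · intro hEq; exact hii (hval2 i' i hEq)
        · rw [hxdef]
          simp only [Pi.add_apply]
          rw [Pi.single_eq_of_ne, Pi.single_eq_of_ne, add_zero]
          · intro hEq; exact hii (hval i' i hEq)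
          · exact Ne.symm (hne i i')
      have hxC : x ∈ C := by
        rw [hmemC]
        intro i'
        by_cases hii : i' = i
        · subst hii
          rw [hxa, hxb, mul_one]
        · rw [(hx0 i' hii).1, (hx0 i' hii).2, mul_zero]
      have h0 := h x hxC
      rw [hsum] at h0
      have hsum' : (∑ i' : Fin k, (x (Fin.castAdd k i') * conjR F m (y (Fin.castAdd k i'))
          + x (Fin.natAdd k i') * conjR F m (y (Fin.natAdd k i'))))
          = conjR F m (y a) + c' * conjR F m (y b) := by
        rw [Finset.sum_eq_single i]
        · rw [hxa, hxb, one_mul]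
        · intro i' _ hii
          rw [(hx0 i' hii).1, (hx0 i' hii).2, zero_mul, zero_mul, add_zero]
        · intro habs; exact absurd (Finset.mem_univ i) habs
      rw [hsum'] at h0
      have h1 := congrArg (conjR F m) h0
      rw [map_add, map_mul, hconjc', conjR_conjR F m hm, conjR_conjR F m hm, map_zero] at h1
      linear_combination (-c') * h1 + (y b) * hc'2
end
end

section
/- Let p be a prime and let C ⊆ F_2^{pℓ} be a binary ℓ-quasi-cyclic self-dual code of length pℓ, i.e., a binary self-dual linear code invariant under T^ℓ, where T is the cyclic coordinate shift. For each i, let A_i be the number of codewords of C of Hamming weight i. If p does not divide i, then p divides A_i. In particular, if d is the minimum weight of C and p does not divide d, then p divides A_d. -/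
noncomputable section

/-- A linear code `C ⊆ K^n` is (Euclidean) self-dual if `C = C^⊥`. -/
def IsSelfDualCode (K : Type) [Field K] {n : ℕ} (C : Submodule K (Fin n → K)) : Prop :=
  ∀ y, y ∈ C ↔ ∀ x ∈ C, ∑ j, x j * y j = 0

/-- `C` is `ℓ`-quasi-cyclic: `T^ℓ(C) = C`, where `T` is the cyclic coordinate shift
sending `(c_0, …, c_{n−1})` to `(c_{n−1}, c_0, …, c_{n−2})`, i.e. `(T v) j = v (j − 1)`. -/
def IsQuasiCyclic (K : Type) [Field K] {n : ℕ} (ℓ : ℕ) (C : Submodule K (Fin n → K)) : Prop :=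
  ∀ v, v ∈ C ↔ (v ∘ ⇑((finRotate n)⁻¹ ^ ℓ)) ∈ C

/-- `C` has minimum (nonzero Hamming) weight `d`. -/
def HasMinWeight (K : Type) [Field K] [DecidableEq K] {n : ℕ}
    (C : Submodule K (Fin n → K)) (d : ℕ) : Prop :=
  IsLeast {w | ∃ v ∈ C, v ≠ 0 ∧ hammingNorm v = w} d

/-- `C` and `D` are permutation equivalent. -/
def PermEquiv (K : Type) [Field K] {n : ℕ} (C D : Submodule K (Fin n → K)) : Prop :=
  ∃ σ : Equiv.Perm (Fin n), ∀ v, v ∈ C ↔ (v ∘ ⇑σ) ∈ D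

/-- `C` and `D` are monomially equivalent: one is obtained from the other by permuting
coordinates and multiplying each coordinate by a nonzero scalar. -/
def MonomialEquiv (K : Type) [Field K] {n : ℕ} (C D : Submodule K (Fin n → K)) : Prop :=
  ∃ (σ : Equiv.Perm (Fin n)) (s : Fin n → K), (∀ j, s j ≠ 0) ∧
    ∀ v, v ∈ C ↔ (fun j => s j * v (σ j)) ∈ D

/-- There are exactly `N` codes satisfying `P`, up to permutation equivalence. -/
def ExactlyNUpToPerm (K : Type) [Field K] {n : ℕ} (N : ℕ)
    (P : Submodule K (Fin n → K) → Prop) : Prop :=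
  ∃ f : Fin N → Submodule K (Fin n → K),
    (∀ i, P (f i)) ∧
    (∀ i j, i ≠ j → ¬ PermEquiv K (f i) (f j)) ∧
    (∀ C, P C → ∃ i, PermEquiv K C (f i))

open Fin.NatCast in
private lemma rotPow {n : ℕ} [NeZero n] (k : ℕ) (x : Fin n) :
    ((finRotate n) ^ k) x = x + (k : Fin n) := by
  rcases n with _ | m
  · exact absurd rfl (NeZero.ne 0)
  · induction k with
    | zero => simp
    | succ k ih =>
      rw [pow_succ', Equiv.Perm.mul_apply, ih, finRotate_succ_apply]
      push_cast
      exact add_assoc _ _ _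

private lemma normCompEquiv {n : ℕ} (σ : Equiv.Perm (Fin n)) (v : Fin n → ZMod 2) :
    hammingNorm (v ∘ ⇑σ) = hammingNorm v := by
  simp only [hammingNorm]
  apply Finset.card_bij (fun a _ => σ a)
  · intro a ha
    simp only [Finset.mem_filter, Finset.mem_univ, true_and] at ha ⊢
    exact ha
  · exact fun a _ b _ h => σ.injective h
  · intro b hb
    refine ⟨σ.symm b, ?_, by simp⟩
    simp only [Finset.mem_filter, Finset.mem_univ, true_and, Function.comp_apply,
      Equiv.apply_symm_apply] at hb ⊢
    exact hb

open Fin.NatCast in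
private lemma keyDvd (p ℓ : ℕ) (hp : 2 ≤ p) (hℓ : 0 < ℓ) (v : Fin (p * ℓ) → ZMod 2)
    (hv : ∀ j : Fin (p * ℓ), v ((finRotate (p * ℓ) ^ ℓ) j) = v j) : p ∣ hammingNorm v := by
  have hn : 0 < p * ℓ := Nat.mul_pos (by omega) hℓ
  have hℓn : ℓ < p * ℓ := by nlinarith
  haveI : NeZero (p * ℓ) := ⟨hn.ne'⟩
  have hcastℓ : ((ℓ : ℕ) : Fin (p * ℓ)) = ⟨ℓ, hℓn⟩ := by
    ext; simp [Fin.val_natCast, Nat.mod_eq_of_lt hℓn]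
  -- v is determined by value mod ℓ
  have claim : ∀ m : ℕ, ∀ h : m < p * ℓ,
      v ⟨m, h⟩ = v ⟨m % ℓ, lt_of_lt_of_le (Nat.mod_lt m hℓ) hℓn.le⟩ := by
    intro m
    induction m using Nat.strong_induction_on with
    | _ m ih =>
      intro h
      by_cases hm : m < ℓ
      · congr 1
        exact Fin.ext (by simp [Nat.mod_eq_of_lt hm])
      · push_neg at hm
        have h2 : m - ℓ < p * ℓ := by omega
        have hstep := hv ⟨m - ℓ, h2⟩
        rw [rotPow, hcastℓ] at hstep
        have haddeq : (⟨m - ℓ, h2⟩ : Fin (p * ℓ)) + (⟨ℓ, hℓn⟩ : Fin (p * ℓ)) = ⟨m, h⟩ := by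
          ext
          simp [Fin.add_def, Nat.sub_add_cancel hm, Nat.mod_eq_of_lt h]
        rw [haddeq] at hstep
        rw [hstep, ih (m - ℓ) (by omega) h2]
        congr 1
        exact Fin.ext (by simp [Nat.mod_eq_sub_mod hm])
  classical
  set w : Fin ℓ → ZMod 2 := fun k => v ⟨k.1, k.2.trans hℓn⟩ with hw
  have hval : ∀ (a : Fin p) (b : Fin ℓ),
      v (finProdFinEquiv (a, b)) = w b := by
    intro a b
    have h1 : finProdFinEquiv (a, b) =
        (⟨b.1 + ℓ * a.1, by simpa using (finProdFinEquiv (a, b)).2⟩ : Fin (p * ℓ)) := rfl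
    rw [h1, claim (b.1 + ℓ * a.1) _]
    have h2 : (b.1 + ℓ * a.1) % ℓ = b.1 := by
      rw [Nat.add_mul_mod_self_left, Nat.mod_eq_of_lt b.2]
    rw [hw]
    congr 1
    exact Fin.ext (by simp [h2])
  have hnorm : hammingNorm v = ∑ j : Fin (p * ℓ), if v j ≠ 0 then 1 else 0 := by
    simp [hammingNorm, Finset.card_filter]
  rw [hnorm, ← Equiv.sum_comp finProdFinEquiv (fun j => if v j ≠ 0 then 1 else 0),
    Fintype.sum_prod_type]
  have : ∀ a : Fin p, (∑ b : Fin ℓ, if v (finProdFinEquiv (a, b)) ≠ 0 then 1 else 0)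
      = ∑ b : Fin ℓ, if w b ≠ 0 then 1 else 0 := by
    intro a
    apply Finset.sum_congr rfl
    intro b _
    rw [hval a b]
  rw [Finset.sum_congr rfl (fun a _ => this a), Finset.sum_const, Finset.card_univ,
    Fintype.card_fin, smul_eq_mul]
  exact Dvd.intro _ rfl

private lemma permDvd {β : Type} [Finite β] {p : ℕ} (hp : p.Prime) (e : Equiv.Perm β)
    (hep : e ^ p = 1) (hfix : ∀ x, e x ≠ x) : p ∣ Nat.card β := by
  classical
  haveI : Fact p.Prime := ⟨hp⟩
  have hPG : IsPGroup p (Subgroup.zpowers e) := by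
    intro g
    refine ⟨1, Subtype.ext ?_⟩
    obtain ⟨z, hz⟩ := Subgroup.mem_zpowers_iff.mp g.2
    push_cast
    rw [← hz, pow_one, ← zpow_natCast (e ^ z) p, ← zpow_mul, mul_comm, zpow_mul,
      zpow_natCast, hep, one_zpow]
  have hmod := hPG.card_modEq_card_fixedPoints β
  haveI hempty : IsEmpty ↥(MulAction.fixedPoints (Subgroup.zpowers e) β) :=
    ⟨by rintro ⟨x, hx⟩; exact hfix x (hx ⟨e, Subgroup.mem_zpowers e⟩)⟩
  have h0 : Nat.card ↥(MulAction.fixedPoints (Subgroup.zpowers e) β) = 0 :=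
    Nat.card_of_isEmpty
  rw [h0] at hmod
  exact (Nat.modEq_zero_iff_dvd).mp hmod

private lemma mainAux (p ℓ : ℕ) (hp : p.Prime)
    (C : Submodule (ZMod 2) (Fin (p * ℓ) → ZMod 2))
    (hqc : IsQuasiCyclic (ZMod 2) ℓ C)
    (i : ℕ) (hi : ¬ p ∣ i) : p ∣ {v | v ∈ C ∧ hammingNorm v = i}.ncard := by
  classical
  rcases Nat.eq_zero_or_pos ℓ with hℓ | hℓ
  · subst hℓ
    have hset : {v : Fin (p * 0) → ZMod 2 | v ∈ C ∧ hammingNorm v = i} = ∅ := by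
      ext v
      simp only [Set.mem_setOf_eq, Set.mem_empty_iff_false, iff_false, not_and]
      intro _
      have h0 : hammingNorm v = 0 :=
        Nat.le_zero.mp (le_trans hammingNorm_le_card_fintype (by simp))
      rw [h0]
      intro h
      exact hi (h ▸ dvd_zero p)
    rw [hset, Set.ncard_empty]
    exact dvd_zero p
  · have hp2 : 2 ≤ p := hp.two_le
    have hn : 0 < p * ℓ := Nat.mul_pos (by omega) hℓ
    haveI : NeZero (p * ℓ) := ⟨hn.ne'⟩
    set τ : Equiv.Perm (Fin (p * ℓ)) := finRotate (p * ℓ) with hτ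
    set σ : Equiv.Perm (Fin (p * ℓ)) := τ⁻¹ ^ ℓ with hσ
    have hmem : ∀ v, v ∈ C ↔ v ∘ ⇑σ ∈ C := hqc
    set s : Set (Fin (p * ℓ) → ZMod 2) := {v | v ∈ C ∧ hammingNorm v = i} with hs
    have hfwd : ∀ x : ↥s, (x : Fin (p * ℓ) → ZMod 2) ∘ ⇑σ ∈ s := fun x =>
      ⟨(hmem x).mp x.2.1, by rw [normCompEquiv]; exact x.2.2⟩
    have hbwd : ∀ x : ↥s, (x : Fin (p * ℓ) → ZMod 2) ∘ ⇑σ⁻¹ ∈ s := fun x => by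
      refine ⟨(hmem _).mpr ?_, by rw [normCompEquiv]; exact x.2.2⟩
      have : ((x : Fin (p * ℓ) → ZMod 2) ∘ ⇑σ⁻¹) ∘ ⇑σ = (x : Fin (p * ℓ) → ZMod 2) :=
        funext fun j => congrArg _ (σ.symm_apply_apply j)
      rw [this]
      exact x.2.1
    set e : Equiv.Perm ↥s :=
      { toFun := fun x => ⟨(x : Fin (p * ℓ) → ZMod 2) ∘ ⇑σ, hfwd x⟩
        invFun := fun x => ⟨(x : Fin (p * ℓ) → ZMod 2) ∘ ⇑σ⁻¹, hbwd x⟩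
        left_inv := fun x => Subtype.ext (funext fun j => congrArg _ (σ.apply_symm_apply j))
        right_inv := fun x => Subtype.ext (funext fun j => congrArg _ (σ.symm_apply_apply j)) }
      with he
    have hepow : ∀ (m : ℕ) (x : ↥s),
        ((e ^ m) x : Fin (p * ℓ) → ZMod 2) = (x : Fin (p * ℓ) → ZMod 2) ∘ ⇑(σ ^ m) := by
      intro m
      induction m with
      | zero => intro x; simp
      | succ m ih =>
        intro x
        have h1 : (e ^ (m + 1)) x = (e ^ m) (e x) := by rw [pow_succ, Equiv.Perm.mul_apply]
        rw [h1, ih (e x)]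
        funext j
        simp [he, pow_succ', Equiv.Perm.mul_apply]
    have hτn : τ ^ (ℓ * p) = 1 := by
      ext x
      rw [hτ, rotPow]
      simp [mul_comm ℓ p]
    have hσp : σ ^ p = 1 := by
      calc σ ^ p = τ⁻¹ ^ (ℓ * p) := by rw [hσ, ← pow_mul]
        _ = (τ ^ (ℓ * p))⁻¹ := by rw [inv_pow]
        _ = 1 := by rw [hτn, inv_one]
    have hep : e ^ p = 1 := by
      apply Equiv.ext
      intro x
      apply Subtype.ext
      rw [hepow p x, hσp]
      simp
    have hfix : ∀ x : ↥s, e x ≠ x := by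
      intro x hx
      have hvs : (x : Fin (p * ℓ) → ZMod 2) ∘ ⇑σ = (x : Fin (p * ℓ) → ZMod 2) :=
        congrArg Subtype.val hx
      have hv : ∀ j, (x : Fin (p * ℓ) → ZMod 2) ((finRotate (p * ℓ) ^ ℓ) j)
          = (x : Fin (p * ℓ) → ZMod 2) j := by
        intro j
        have h1 : σ ((τ ^ ℓ) j) = j := by
          rw [hσ, inv_pow]
          exact (τ ^ ℓ).symm_apply_apply j
        have h2 := congrFun hvs ((τ ^ ℓ) j)
        simp only [Function.comp_apply, h1] at h2
        rw [hτ] at h2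
        exact h2.symm
      have hdvd := keyDvd p ℓ hp2 hℓ _ hv
      rw [x.2.2] at hdvd
      exact hi hdvd
    have hdvd : p ∣ Nat.card ↥s := permDvd hp e hep hfix
    rw [← Nat.card_coe_set_eq]
    exact hdvd

/-- For a binary `ℓ`-quasi-cyclic self-dual code of length `pℓ` (`p` prime): if `p ∤ i`
then `p ∣ A_i`; in particular `p ∣ A_d` when `d` is the minimum weight and `p ∤ d`. -/
theorem statement12 (p ℓ : ℕ) (hp : p.Prime)
    (C : Submodule (ZMod 2) (Fin (p * ℓ) → ZMod 2))
    (hsd : IsSelfDualCode (ZMod 2) C)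
    (hqc : IsQuasiCyclic (ZMod 2) ℓ C) :
    (∀ i : ℕ, ¬ p ∣ i → p ∣ {v | v ∈ C ∧ hammingNorm v = i}.ncard) ∧
    (∀ d : ℕ, HasMinWeight (ZMod 2) C d → ¬ p ∣ d →
      p ∣ {v | v ∈ C ∧ hammingNorm v = d}.ncard) := by
  exact ⟨fun i hi => mainAux p ℓ hp C hqc i hi,
    fun d _ hdp => mainAux p ℓ hp C hqc d hdp⟩
end
end
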